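/- Let l_1 and l_2 be subdegree sequences and let d ≥ 3 be an integer. Let l_1 + l_2 denote the subdegree sequence obtained by merging the entries of l_1 and l_2 (and reordering nonincreasingly). Then C(v(l_1+l_2), v(l_1)) · R(l_1+l_2, d) ≥ R(l_1,d)·R(l_2,d), where C(·,·) is the binomial coefficient and v denotes total degree. Equality occurs if and only if no positive integer occurs as an entry of both l_1 and l_2. -/

import Mathlib

/-- Collins' function `JC`: the maximal order of a finite primitive subgroup of
`PGL(r,ℂ)`. -/
def JC : ℕ → ℕ
  | 1 => 1
  | 2 => 60
  | 3 => 360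
  | 4 => 25920
  | 5 => 25920
  | 6 => 6531840
  | 7 => 1451520
  | 8 => 348364800
  | 9 => 4199040
  | 12 => 448345497600
  | r => (r + 1).factorial

/-- A subdegree sequence, recorded as the multiset of its entries: it must be nonempty
and all entries must be positive. -/
def IsSubdegreeSeq (l : Multiset ℕ) : Prop := l ≠ 0 ∧ ∀ x ∈ l, 0 < x

/-- The Fermat-test ratio `R(l,d)`. -/
def FTR (l : Multiset ℕ) (d : ℕ) : ℚ :=
  ((d ^ (Multiset.card l) * (l.map JC).prod
      * ∏ x ∈ l.toFinset, (l.count x).factorial : ℕ) : ℚ)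
    / ((d ^ l.sum * l.sum.factorial : ℕ) : ℚ)

lemma JC_pos (r : ℕ) : 0 < JC r := by
  rw [JC.eq_def]
  split
  case h_11 => exact Nat.factorial_pos _
  all_goals norm_num

lemma two_le_choose (a b : ℕ) (ha : 0 < a) (hb : 0 < b) : 2 ≤ (a + b).choose b := by
  obtain ⟨a', rfl⟩ := Nat.exists_eq_succ_of_ne_zero ha.ne'
  obtain ⟨b', rfl⟩ := Nat.exists_eq_succ_of_ne_zero hb.ne'
  have h1 : 0 < (a' + b' + 1).choose b' := Nat.choose_pos (by omega)
  have h2 : 0 < (a' + b' + 1).choose (b' + 1) := Nat.choose_pos (by omega)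
  have h3 : a' + 1 + (b' + 1) = (a' + b' + 1) + 1 := by omega
  rw [h3, Nat.choose_succ_succ]
  simp only [Nat.succ_eq_add_one] at *
  omega

lemma fact_mul_fact_le (a b : ℕ) : a.factorial * b.factorial ≤ (a + b).factorial := by
  have key := Nat.add_choose_mul_factorial_mul_factorial a b
  have h1 : 0 < (a + b).choose b := Nat.choose_pos (by omega)
  nlinarith [Nat.factorial_pos a, Nat.factorial_pos b]

lemma fact_mul_fact_lt (a b : ℕ) (ha : 0 < a) (hb : 0 < b) :
    a.factorial * b.factorial < (a + b).factorial := by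
  have key := Nat.add_choose_mul_factorial_mul_factorial a b
  have h2 := two_le_choose a b ha hb
  nlinarith [Nat.factorial_pos a, Nat.factorial_pos b]

/-- super-multiplicativity of the Fermat-test ratio with respect to
merging subdegree sequences, with equality exactly for disjoint entry sets. -/
theorem FTR_merge_inequality
    (l₁ l₂ : Multiset ℕ) (hl₁ : IsSubdegreeSeq l₁) (hl₂ : IsSubdegreeSeq l₂)
    (d : ℕ) (hd : 3 ≤ d) :
    FTR l₁ d * FTR l₂ d ≤ ((l₁ + l₂).sum.choose l₁.sum : ℚ) * FTR (l₁ + l₂) d ∧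
    (((l₁ + l₂).sum.choose l₁.sum : ℚ) * FTR (l₁ + l₂) d = FTR l₁ d * FTR l₂ d ↔
      ∀ x, x ∈ l₁ → x ∉ l₂) := by
  classical
  set s : Finset ℕ := l₁.toFinset ∪ l₂.toFinset with hs
  have hprod : ∀ (l : Multiset ℕ), l.toFinset ⊆ s →
      ∏ x ∈ l.toFinset, (l.count x).factorial = ∏ x ∈ s, (l.count x).factorial := by
    intro l hsub
    refine Finset.prod_subset hsub ?_
    intro x _ hx
    rw [Multiset.count_eq_zero.mpr (by simpa using hx)]
    rfl
  have h1 := hprod l₁ Finset.subset_union_left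
  have h2 := hprod l₂ Finset.subset_union_right
  have h12 : ∏ x ∈ (l₁ + l₂).toFinset, ((l₁ + l₂).count x).factorial
      = ∏ x ∈ s, (l₁.count x + l₂.count x).factorial := by
    rw [Multiset.toFinset_add]
    exact Finset.prod_congr rfl fun x _ => by rw [Multiset.count_add]
  have hd0 : (0:ℚ) < (d:ℚ) := by exact_mod_cast (by omega : 0 < d)
  set K : ℚ :=
    ((d ^ (Multiset.card l₁ + Multiset.card l₂)
        * ((l₁.map JC).prod * (l₂.map JC).prod) : ℕ) : ℚ)
      / ((d ^ (l₁.sum + l₂.sum) * (l₁.sum.factorial * l₂.sum.factorial) : ℕ) : ℚ)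
    with hK
  have hP1 : 0 < (l₁.map JC).prod := Multiset.prod_pos (by
    intro x hx; obtain ⟨r, _, rfl⟩ := Multiset.mem_map.mp hx; exact JC_pos r)
  have hP2 : 0 < (l₂.map JC).prod := Multiset.prod_pos (by
    intro x hx; obtain ⟨r, _, rfl⟩ := Multiset.mem_map.mp hx; exact JC_pos r)
  have hdpos : 0 < d := by omega
  have hKpos : 0 < K := by
    apply div_pos
    · exact_mod_cast Nat.mul_pos (Nat.pow_pos hdpos) (Nat.mul_pos hP1 hP2)
    · exact_mod_cast Nat.mul_pos (Nat.pow_pos hdpos)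
        (Nat.mul_pos (Nat.factorial_pos _) (Nat.factorial_pos _))
  -- denominators nonzero
  have hden1 : ((d ^ l₁.sum * l₁.sum.factorial : ℕ) : ℚ) ≠ 0 := by
    exact_mod_cast (Nat.mul_pos (Nat.pow_pos hdpos) (Nat.factorial_pos _)).ne'
  have hden2 : ((d ^ l₂.sum * l₂.sum.factorial : ℕ) : ℚ) ≠ 0 := by
    exact_mod_cast (Nat.mul_pos (Nat.pow_pos hdpos) (Nat.factorial_pos _)).ne'
  have hdenK : ((d ^ (l₁.sum + l₂.sum) * (l₁.sum.factorial * l₂.sum.factorial) : ℕ) : ℚ) ≠ 0 := by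
    exact_mod_cast (Nat.mul_pos (Nat.pow_pos hdpos)
      (Nat.mul_pos (Nat.factorial_pos _) (Nat.factorial_pos _))).ne'
  have hden12 : ((d ^ (l₁ + l₂).sum * (l₁ + l₂).sum.factorial : ℕ) : ℚ) ≠ 0 := by
    exact_mod_cast (Nat.mul_pos (Nat.pow_pos hdpos) (Nat.factorial_pos _)).ne'
  have hch : (l₁.sum + l₂.sum).choose l₁.sum * (l₁.sum.factorial * l₂.sum.factorial)
      = (l₁.sum + l₂.sum).factorial := by
    have := Nat.add_choose_mul_factorial_mul_factorial l₂.sum l₁.sum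
    rw [add_comm l₂.sum l₁.sum] at this
    rw [← this]; ring
  have E1 : FTR l₁ d * FTR l₂ d
      = K * (((∏ x ∈ s, (l₁.count x).factorial) * ∏ x ∈ s, (l₂.count x).factorial : ℕ) : ℚ) := by
    rw [FTR, FTR, h1, h2, hK]
    rw [div_mul_div_comm, div_mul_eq_mul_div]
    rw [div_eq_div_iff (by exact mul_ne_zero hden1 hden2) hdenK]
    push_cast
    ring
  have E2 : ((l₁ + l₂).sum.choose l₁.sum : ℚ) * FTR (l₁ + l₂) d
      = K * ((∏ x ∈ s, (l₁.count x + l₂.count x).factorial : ℕ) : ℚ) := by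
    have hsum : (l₁ + l₂).sum = l₁.sum + l₂.sum := Multiset.sum_add l₁ l₂
    have hcard : Multiset.card (l₁ + l₂) = Multiset.card l₁ + Multiset.card l₂ :=
      Multiset.card_add l₁ l₂
    have hmap : ((l₁ + l₂).map JC).prod = (l₁.map JC).prod * (l₂.map JC).prod := by
      rw [Multiset.map_add, Multiset.prod_add]
    have hchq : (((l₁.sum + l₂.sum).choose l₁.sum : ℕ) : ℚ)
        * ((l₁.sum.factorial * l₂.sum.factorial : ℕ) : ℚ)
        = (((l₁.sum + l₂.sum).factorial : ℕ) : ℚ) := by exact_mod_cast hch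
    have hden12' : ((d ^ (l₁.sum + l₂.sum) * (l₁.sum + l₂.sum).factorial : ℕ) : ℚ) ≠ 0 := by
      exact_mod_cast (Nat.mul_pos (Nat.pow_pos hdpos) (Nat.factorial_pos _)).ne'
    rw [FTR, h12, hsum, hcard, hmap, hK]
    rw [mul_div_assoc', div_mul_eq_mul_div, div_eq_div_iff hden12' hdenK]
    push_cast at hchq ⊢
    linear_combination ((d:ℚ) ^ (Multiset.card l₁ + Multiset.card l₂)
      * (Multiset.map (Nat.cast : ℕ → ℚ) (Multiset.map JC l₁)).prod
      * (Multiset.map (Nat.cast : ℕ → ℚ) (Multiset.map JC l₂)).prod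
      * (∏ x ∈ s, ((l₁.count x + l₂.count x).factorial : ℚ))
      * (d:ℚ) ^ (l₁.sum + l₂.sum)) * hchq
  have hiff : (∀ x, x ∈ l₁ → x ∉ l₂) ↔ ∀ x ∈ s, l₁.count x = 0 ∨ l₂.count x = 0 := by
    constructor
    · intro h x _
      by_cases hx : x ∈ l₁
      · exact Or.inr (Multiset.count_eq_zero.mpr (h x hx))
      · exact Or.inl (Multiset.count_eq_zero.mpr hx)
    · intro h x hx1 hx2
      have hxs : x ∈ s := by
        rw [hs, Finset.mem_union]
        exact Or.inl (Multiset.mem_toFinset.mpr hx1)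
      rcases h x hxs with h0 | h0
      · exact Multiset.count_eq_zero.mp h0 hx1
      · exact Multiset.count_eq_zero.mp h0 hx2
  have hAle : (∏ x ∈ s, (l₁.count x).factorial) * (∏ x ∈ s, (l₂.count x).factorial)
      ≤ ∏ x ∈ s, (l₁.count x + l₂.count x).factorial := by
    rw [← Finset.prod_mul_distrib]
    exact Finset.prod_le_prod' fun x _ => fact_mul_fact_le _ _
  have hAeq : (∏ x ∈ s, (l₁.count x + l₂.count x).factorial
        = (∏ x ∈ s, (l₁.count x).factorial) * ∏ x ∈ s, (l₂.count x).factorial)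
      ↔ (∀ x ∈ s, l₁.count x = 0 ∨ l₂.count x = 0) := by
    rw [← Finset.prod_mul_distrib]
    constructor
    · intro h
      by_contra hc
      push_neg at hc
      obtain ⟨x, hxs, hx1, hx2⟩ := hc
      have hlt : ∏ x ∈ s, (l₁.count x).factorial * (l₂.count x).factorial
          < ∏ x ∈ s, (l₁.count x + l₂.count x).factorial := by
        refine Finset.prod_lt_prod (fun i _ => ?_) (fun i _ => fact_mul_fact_le _ _)
          ⟨x, hxs, fact_mul_fact_lt _ _ (Nat.pos_of_ne_zero hx1) (Nat.pos_of_ne_zero hx2)⟩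
        exact Nat.mul_pos (Nat.factorial_pos _) (Nat.factorial_pos _)
      omega
    · intro h
      refine (Finset.prod_congr rfl fun x hx => ?_)
      rcases h x hx with h0 | h0 <;> simp [h0]
  constructor
  · rw [E1, E2]
    exact mul_le_mul_of_nonneg_left (Nat.cast_le.mpr hAle) hKpos.le
  · rw [E1, E2]
    constructor
    · intro h
      exact hiff.mpr (hAeq.mp (Nat.cast_inj.mp ((mul_right_inj' hKpos.ne').mp h)))
    · intro h
      exact congrArg (K * ·) (by exact_mod_cast hAeq.mpr (hiff.mp h))
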